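/- Let X be a compact metric space and let f : X → X be a homeomorphism. If there exists a Borel probability measure on X that is inner-distal with respect to f, then there exists an f-invariant Borel probability measure on X that is inner-distal with respect to f. -/

import Mathlib

open Metric Set MeasureTheory Filter Topology
open scoped ENNReal NNReal

/-- The proximal cell of `x` with respect to the iterates `f ^ n`, `n : ℤ`. -/
noncomputable def proximalCell {X : Type*} [MetricSpace X] (f : Equiv.Perm X) (x : X) : Set X :=
  {y | (⨅ n : ℤ, dist ((f ^ n) x) ((f ^ n) y)) = 0}

lemma apply_zpow_add {X : Type*} (e : Equiv.Perm X) (a b : ℤ) (u : X) :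
    (e ^ (a + b)) u = (e ^ a) ((e ^ b) u) := by
  rw [zpow_add]; rfl

lemma preimage_zpow_proximalCell {X : Type*} [MetricSpace X] (e : Equiv.Perm X) (x : X) (m : ℤ) :
    (e ^ m) ⁻¹' proximalCell e x = proximalCell e ((e ^ (-m)) x) := by
  ext y
  simp only [proximalCell, Set.mem_preimage, Set.mem_setOf_eq]
  have key : (Set.range fun n : ℤ => dist ((e ^ n) x) ((e ^ n) ((e ^ m) y)))
      = Set.range fun n : ℤ => dist ((e ^ n) ((e ^ (-m)) x)) ((e ^ n) y) := by
    ext r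
    constructor
    · rintro ⟨n, rfl⟩
      refine ⟨n + m, ?_⟩
      show dist ((e ^ (n + m)) ((e ^ (-m)) x)) ((e ^ (n + m)) y)
          = dist ((e ^ n) x) ((e ^ n) ((e ^ m) y))
      rw [← apply_zpow_add e (n + m) (-m) x, add_neg_cancel_right, apply_zpow_add e n m y]
    · rintro ⟨n, rfl⟩
      refine ⟨n - m, ?_⟩
      show dist ((e ^ (n - m)) x) ((e ^ (n - m)) ((e ^ m) y))
          = dist ((e ^ n) ((e ^ (-m)) x)) ((e ^ n) y)
      rw [← apply_zpow_add e (n - m) m y, sub_add_cancel, ← apply_zpow_add e n (-m) x,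
        ← sub_eq_add_neg]
  have h1 : (⨅ n : ℤ, dist ((e ^ n) x) ((e ^ n) ((e ^ m) y)))
      = sInf (Set.range fun n : ℤ => dist ((e ^ n) x) ((e ^ n) ((e ^ m) y))) := rfl
  have h2 : (⨅ n : ℤ, dist ((e ^ n) ((e ^ (-m)) x)) ((e ^ n) y))
      = sInf (Set.range fun n : ℤ => dist ((e ^ n) ((e ^ (-m)) x)) ((e ^ n) y)) := rfl
  rw [h1, h2, key]

/-- Cesàro averages of a sequence. -/
noncomputable def cesAvg (a : ℕ → ℝ) (N : ℕ) : ℝ := (∑ k ∈ Finset.range N, a k) / N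

lemma cesAvg_mem {a : ℕ → ℝ} (ha : ∀ n, a n ∈ Icc (0:ℝ) 2) (N : ℕ) :
    cesAvg a N ∈ Icc (0:ℝ) 2 := by
  rcases Nat.eq_zero_or_pos N with h | h
  · simp [cesAvg, h]
  constructor
  · exact div_nonneg (Finset.sum_nonneg fun k _ => (ha k).1) (Nat.cast_nonneg N)
  · rw [cesAvg, div_le_iff₀ (by exact_mod_cast h)]
    calc ∑ k ∈ Finset.range N, a k ≤ ∑ _k ∈ Finset.range N, (2:ℝ) :=
          Finset.sum_le_sum fun k _ => (ha k).2
      _ = 2 * N := by simp [mul_comm]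

lemma cesAvg_mono {a b : ℕ → ℝ} (hab : ∀ n, a n ≤ b n) (N : ℕ) :
    cesAvg a N ≤ cesAvg b N := by
  rcases Nat.eq_zero_or_pos N with h | h
  · simp [cesAvg, h]
  · exact (div_le_div_iff_of_pos_right (by exact_mod_cast h)).mpr
      (Finset.sum_le_sum fun k _ => hab k)

lemma cesAvg_add (a b : ℕ → ℝ) : cesAvg (fun n => a n + b n) = fun N => cesAvg a N + cesAvg b N := by
  funext N
  simp [cesAvg, Finset.sum_add_distrib, add_div]

lemma cesAvg_shift {a : ℕ → ℝ} (N : ℕ) :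
    cesAvg (fun n => a (n + 1)) N = cesAvg a N + (a N - a 0) / N := by
  rcases Nat.eq_zero_or_pos N with h | h
  · simp [cesAvg, h]
  have hsum : ∑ k ∈ Finset.range N, a (k + 1) = ∑ k ∈ Finset.range N, a k + (a N - a 0) := by
    have h1 := Finset.sum_range_succ' a N
    have h2 := Finset.sum_range_succ a N
    linarith
  simp only [cesAvg, hsum, add_div]

/-- On a compact metric space, if some Borel probability measure is inner-distal with
respect to a homeomorphism, then some invariant Borel probability measure is inner-distal. -/
theorem stmt4 {X : Type*} [MetricSpace X] [CompactSpace X] [MeasurableSpace X] [BorelSpace X]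
    (f : X ≃ₜ X)
    (h : ∃ μ : Measure X, IsProbabilityMeasure μ ∧
      ∀ x : X, μ (interior (proximalCell f.toEquiv x)) = 0) :
    ∃ μ : Measure X, IsProbabilityMeasure μ ∧
      (∀ A : Set X, MeasurableSet A → μ (f ⁻¹' A) = μ A) ∧
      ∀ x : X, μ (interior (proximalCell f.toEquiv x)) = 0 := by
  classical
  obtain ⟨μ, hprob, hdist⟩ := h
  set e : Equiv.Perm X := f.toEquiv with he
  -- an ultrafilter extending `atTop` on ℕ
  let U : Ultrafilter ℕ := Ultrafilter.of atTop
  have hUle : (U : Filter ℕ) ≤ atTop := Ultrafilter.of_le _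
  -- the "Banach limit" style mean of Cesàro averages along U
  set m : (ℕ → ℝ) → ℝ := fun a => limUnder (U : Filter ℕ) (cesAvg a) with hm
  have htend : ∀ a : ℕ → ℝ, (∀ n, a n ∈ Icc (0:ℝ) 2) →
      Tendsto (cesAvg a) (U : Filter ℕ) (𝓝 (m a)) := by
    intro a ha
    apply tendsto_nhds_limUnder
    have hmem : Icc (0:ℝ) 2 ∈ Ultrafilter.map (cesAvg a) U :=
      Filter.mem_map.mpr (Filter.univ_mem' fun N => cesAvg_mem ha N)
    obtain ⟨L, -, hL⟩ := isCompact_Icc.ultrafilter_le_nhds (U.map (cesAvg a))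
      (Filter.le_principal_iff.mpr hmem)
    exact ⟨L, by rwa [Tendsto, ← Ultrafilter.coe_map]⟩
  have hmono : ∀ a b : ℕ → ℝ, (∀ n, a n ∈ Icc (0:ℝ) 2) → (∀ n, b n ∈ Icc (0:ℝ) 2) →
      (∀ n, a n ≤ b n) → m a ≤ m b := by
    intro a b ha hb hab
    exact le_of_tendsto_of_tendsto' (htend a ha) (htend b hb) (cesAvg_mono hab)
  have hzero : m (fun _ => (0:ℝ)) = 0 := by
    have h0 : ∀ n : ℕ, (fun _ : ℕ => (0:ℝ)) n ∈ Icc (0:ℝ) 2 := fun n => ⟨le_refl _, by norm_num⟩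
    refine tendsto_nhds_unique (htend _ h0) ?_
    have : cesAvg (fun _ : ℕ => (0:ℝ)) = fun _ => 0 := by
      funext N; simp [cesAvg]
    rw [this]
    exact tendsto_const_nhds
  have hone : m (fun _ => (1:ℝ)) = 1 := by
    have h1 : ∀ n : ℕ, (fun _ : ℕ => (1:ℝ)) n ∈ Icc (0:ℝ) 2 := fun n => ⟨by norm_num, by norm_num⟩
    refine tendsto_nhds_unique (htend _ h1) ?_
    have hev : ∀ᶠ N : ℕ in atTop, cesAvg (fun _ : ℕ => (1:ℝ)) N = 1 := by
      filter_upwards [eventually_ne_atTop 0] with N hN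
      simp only [cesAvg, Finset.sum_const, Finset.card_range, nsmul_eq_mul, mul_one]
      exact div_self (Nat.cast_ne_zero.mpr hN)
    have : Tendsto (cesAvg fun _ : ℕ => (1:ℝ)) atTop (𝓝 1) :=
      (tendsto_congr' hev).mpr tendsto_const_nhds
    exact this.mono_left hUle
  have hadd : ∀ a b : ℕ → ℝ, (∀ n, a n ∈ Icc (0:ℝ) 1) → (∀ n, b n ∈ Icc (0:ℝ) 1) →
      m (fun n => a n + b n) = m a + m b := by
    intro a b ha hb
    have ha2 : ∀ n, a n ∈ Icc (0:ℝ) 2 := fun n => ⟨(ha n).1, (ha n).2.trans one_le_two⟩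
    have hb2 : ∀ n, b n ∈ Icc (0:ℝ) 2 := fun n => ⟨(hb n).1, (hb n).2.trans one_le_two⟩
    have hab2 : ∀ n, a n + b n ∈ Icc (0:ℝ) 2 := fun n =>
      ⟨add_nonneg (ha n).1 (hb n).1, by linarith [(ha n).2, (hb n).2]⟩
    refine tendsto_nhds_unique (htend _ hab2) ?_
    have := (htend a ha2).add (htend b hb2)
    rwa [← cesAvg_add] at this
  have hshift : ∀ a : ℕ → ℝ, (∀ n, a n ∈ Icc (0:ℝ) 2) → m (fun n => a (n + 1)) = m a := by
    intro a ha
    have ha' : ∀ n, a (n + 1) ∈ Icc (0:ℝ) 2 := fun n => ha _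
    have hdiff : Tendsto (fun N : ℕ => (a N - a 0) / N) atTop (𝓝 0) := by
      have h4 : Tendsto (fun N : ℕ => 4 / (N:ℝ)) atTop (𝓝 0) :=
        tendsto_const_nhds.div_atTop tendsto_natCast_atTop_atTop
      apply squeeze_zero_norm ?_ h4
      intro N
      rcases Nat.eq_zero_or_pos N with hN | hN
      · simp [hN]
      · rw [norm_div, Real.norm_natCast,
          div_le_div_iff_of_pos_right (by exact_mod_cast hN)]
        have hb : |a N - a 0| ≤ 2 := abs_le.mpr
          ⟨by linarith [(ha N).1, (ha 0).2], by linarith [(ha N).2, (ha 0).1]⟩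
        calc ‖a N - a 0‖ = |a N - a 0| := rfl
          _ ≤ 2 := hb
          _ ≤ 4 := by norm_num
    refine tendsto_nhds_unique (htend _ ha') ?_
    have h1 : Tendsto (fun N => cesAvg a N + (a N - a 0) / N) (U : Filter ℕ) (𝓝 (m a + 0)) :=
      (htend a ha).add (hdiff.mono_left hUle)
    rw [add_zero] at h1
    exact h1.congr fun N => (cesAvg_shift N).symm
  -- the sequence of pulled-back measures
  set B : Set X → ℕ → ℝ := fun S n => (μ ((⇑f)^[n] ⁻¹' S)).toReal with hB
  have hB01 : ∀ (S : Set X) (n : ℕ), B S n ∈ Icc (0:ℝ) 1 := by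
    intro S n
    refine ⟨ENNReal.toReal_nonneg, ?_⟩
    have := prob_le_one (μ := μ) (s := (⇑f)^[n] ⁻¹' S)
    calc (μ ((⇑f)^[n] ⁻¹' S)).toReal ≤ (1 : ℝ≥0∞).toReal :=
          ENNReal.toReal_mono (by simp) this
      _ = 1 := by simp
  have hB02 : ∀ (S : Set X) (n : ℕ), B S n ∈ Icc (0:ℝ) 2 := fun S n =>
    ⟨(hB01 S n).1, (hB01 S n).2.trans one_le_two⟩
  have hmnonneg : ∀ a : ℕ → ℝ, (∀ n, a n ∈ Icc (0:ℝ) 2) → 0 ≤ m a := by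
    intro a ha
    have := hmono (fun _ => 0) a (fun n => ⟨le_refl _, by norm_num⟩) ha (fun n => (ha n).1)
    rwa [hzero] at this
  have hBshift : ∀ (S : Set X) (n : ℕ), B S (n + 1) = B (⇑f ⁻¹' S) n := by
    intro S n
    simp only [hB]
    rw [Function.iterate_succ', Function.comp_def]
    rfl
  -- the invariant content
  set lam : TopologicalSpace.Compacts X → ℝ≥0 :=
    fun K => (m (B ↑K)).toNNReal with hlam
  have hlam_mono : ∀ K₁ K₂ : TopologicalSpace.Compacts X, (K₁ : Set X) ⊆ K₂ →
      lam K₁ ≤ lam K₂ := by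
    intro K₁ K₂ hsub
    apply Real.toNNReal_mono
    apply hmono _ _ (hB02 _) (hB02 _)
    intro n
    exact ENNReal.toReal_mono (measure_ne_top μ _) (measure_mono (preimage_mono hsub))
  have hlam_union : ∀ K₁ K₂ : TopologicalSpace.Compacts X, Disjoint (K₁ : Set X) K₂ →
      IsClosed (K₁ : Set X) → IsClosed (K₂ : Set X) → lam (K₁ ⊔ K₂) = lam K₁ + lam K₂ := by
    intro K₁ K₂ hdisj h1 h2
    have hBu : B ↑(K₁ ⊔ K₂) = fun n => B ↑K₁ n + B ↑K₂ n := by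
      funext n
      simp only [hB, TopologicalSpace.Compacts.coe_sup, Set.preimage_union]
      rw [measure_union (hdisj.preimage _)
        (h2.measurableSet.preimage (f.continuous.iterate n).measurable),
        ENNReal.toReal_add (measure_ne_top μ _) (measure_ne_top μ _)]
    simp only [hlam]
    rw [hBu, hadd _ _ (hB01 _) (hB01 _)]
    exact Real.toNNReal_add (hmnonneg _ (hB02 _)) (hmnonneg _ (hB02 _))
  have hlam_sup_le : ∀ K₁ K₂ : TopologicalSpace.Compacts X,
      lam (K₁ ⊔ K₂) ≤ lam K₁ + lam K₂ := by
    intro K₁ K₂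
    rw [← Real.toNNReal_add (hmnonneg _ (hB02 _)) (hmnonneg _ (hB02 _)),
      ← hadd _ _ (hB01 _) (hB01 _)]
    apply Real.toNNReal_mono
    apply hmono _ _ (hB02 _) (fun n => ⟨add_nonneg (hB01 _ n).1 (hB01 _ n).1,
      by linarith [(hB01 (↑K₁) n).2, (hB01 (↑K₂) n).2]⟩)
    intro n
    simp only [hB, TopologicalSpace.Compacts.coe_sup, Set.preimage_union]
    calc (μ ((⇑f)^[n] ⁻¹' ↑K₁ ∪ (⇑f)^[n] ⁻¹' ↑K₂)).toReal
        ≤ (μ ((⇑f)^[n] ⁻¹' ↑K₁) + μ ((⇑f)^[n] ⁻¹' ↑K₂)).toReal :=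
          ENNReal.toReal_mono (by simp [ENNReal.add_ne_top, measure_ne_top]) (measure_union_le _ _)
      _ = _ := ENNReal.toReal_add (measure_ne_top μ _) (measure_ne_top μ _)
  set C : Content X := ⟨lam, hlam_mono, hlam_union, hlam_sup_le⟩ with hC
  -- invariance of the content
  have hmap : ∀ ⦃K : TopologicalSpace.Compacts X⦄,
      C (K.map f f.continuous) = C K := by
    intro K
    have hcarrier : ((K.map f f.continuous : TopologicalSpace.Compacts X) : Set X)
        = f '' ↑K := rfl
    have hBK : B ↑K = fun n => B (f '' ↑K) (n + 1) := by
      funext n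
      rw [hBshift, Set.preimage_image_eq _ f.injective]
    have : lam (K.map f f.continuous) = lam K := by
      rw [hlam]
      simp only [hcarrier, hBK]
      exact congrArg Real.toNNReal (hshift _ (hB02 _)).symm
    exact congrArg ((↑) : ℝ≥0 → ℝ≥0∞) this
  refine ⟨C.measure, ?_, ?_, ?_⟩
  · -- probability measure
    constructor
    rw [Content.measure_apply _ MeasurableSet.univ,
      C.outerMeasure_of_isOpen univ isOpen_univ,
      C.innerContent_of_isCompact isCompact_univ isOpen_univ]
    have hBuniv : B (univ : Set X) = fun _ => (1:ℝ) := by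
      funext n
      simp [hB]
    have : lam ⟨univ, isCompact_univ⟩ = 1 := by
      rw [hlam]
      simp only [TopologicalSpace.Compacts.coe_mk, hBuniv, hone]
      simp
    show ((C.toFun ⟨univ, isCompact_univ⟩ : ℝ≥0) : ℝ≥0∞) = 1
    rw [show C.toFun = lam from rfl, this]
    simp
  · -- invariance
    intro A hA
    rw [Content.measure_apply _ (hA.preimage f.continuous.measurable),
      Content.measure_apply _ hA]
    exact C.outerMeasure_preimage f hmap A
  · -- inner-distality
    intro x
    have hopen : IsOpen (interior (proximalCell e x)) := isOpen_interior
    rw [Content.measure_apply _ hopen.measurableSet,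
      C.outerMeasure_of_isOpen _ hopen]
    refine le_antisymm ?_ zero_le
    rw [Content.innerContent]
    refine iSup₂_le fun K hK => ?_
    have hBK0 : B ↑K = fun _ => (0:ℝ) := by
      funext n
      have hiter : (⇑f)^[n] = ⇑(e ^ (n : ℤ)) := by
        rw [zpow_natCast]
        exact (Equiv.Perm.iterate_eq_pow e n) ▸ rfl
      have hsub : (⇑f)^[n] ⁻¹' interior (proximalCell e x)
          ⊆ interior (proximalCell e ((e ^ (-(n:ℤ))) x)) := by
        apply interior_maximal
        · calc (⇑f)^[n] ⁻¹' interior (proximalCell e x)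
              ⊆ (⇑f)^[n] ⁻¹' proximalCell e x := preimage_mono interior_subset
            _ = (e ^ (n:ℤ)) ⁻¹' proximalCell e x := by rw [hiter]
            _ = proximalCell e ((e ^ (-(n:ℤ))) x) := preimage_zpow_proximalCell e x _
        · exact isOpen_interior.preimage (f.continuous.iterate n)
      have hμ0 : μ ((⇑f)^[n] ⁻¹' interior (proximalCell e x)) = 0 := by
        apply le_antisymm _ zero_le
        calc μ ((⇑f)^[n] ⁻¹' interior (proximalCell e x))
            ≤ μ (interior (proximalCell e ((e ^ (-(n:ℤ))) x))) := measure_mono hsub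
          _ = 0 := hdist _
      have : μ ((⇑f)^[n] ⁻¹' ↑K) = 0 := by
        apply le_antisymm _ zero_le
        calc μ ((⇑f)^[n] ⁻¹' ↑K) ≤ μ ((⇑f)^[n] ⁻¹' interior (proximalCell e x)) :=
              measure_mono (preimage_mono hK)
          _ = 0 := hμ0
      simp [hB, this]
    show ((C.toFun K : ℝ≥0) : ℝ≥0∞) ≤ 0
    rw [show C.toFun = lam from rfl, hlam]
    simp only [hBK0, hzero]
    simp
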